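/- Let k ≥ 2 be an integer and let p be a monic irreducible polynomial with integer coefficients such that p(n) divides p(n^k) for infinitely many positive integers n. Then either p(x) = x, or p = Φ_j for some positive integer j with gcd(j, k) = 1. -/

import Mathlib

open Polynomial Filter

private lemma aux_dvd (p q : Polynomial ℤ) (hp : p.Monic) (hdeg : 0 < p.degree)
    (h : {n : ℕ | 0 < n ∧ p.eval (n : ℤ) ∣ q.eval (n : ℤ)}.Infinite) : p ∣ q := by
  set r := q %ₘ p with hr
  have hqr : q = p * (q /ₘ p) + r := by
    rw [hr, add_comm]; exact (modByMonic_add_div q p).symm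
  have hdvdr : ∀ n : ℕ, n ∈ {n : ℕ | 0 < n ∧ p.eval (n : ℤ) ∣ q.eval (n : ℤ)} →
      p.eval (n : ℤ) ∣ r.eval (n : ℤ) := by
    intro n hn
    have he : q.eval (n : ℤ) = p.eval (n : ℤ) * (q /ₘ p).eval (n : ℤ) + r.eval (n : ℤ) := by
      conv_lhs => rw [hqr]
      simp
    exact (dvd_add_right (Dvd.intro _ rfl)).mp (he ▸ hn.2)
  have hrzero : r = 0 := by
    by_contra hr0
    -- real growth argument
    set φ := Int.castRingHom ℝ with hφ
    have hinj : Function.Injective φ := Int.cast_injective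
    set pr := p.map φ with hpr
    set rr := r.map φ with hrr
    have hdegpr : pr.degree = p.degree := degree_map_eq_of_injective hinj p
    have hdegrr : rr.degree = r.degree := degree_map_eq_of_injective hinj r
    have hrltp : rr.degree < pr.degree := by
      rw [hdegpr, hdegrr]
      exact lt_of_lt_of_le (degree_modByMonic_lt q hp) le_rfl
    have hlc : pr.leadingCoeff = 1 := by
      simpa using (hp.map φ).leadingCoeff
    have hdpr : 0 < pr.degree := hdegpr ▸ hdeg
    have tendA : Tendsto (fun x : ℝ => (pr - rr).eval x) atTop atTop := by
      apply Polynomial.tendsto_atTop_of_leadingCoeff_nonneg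
      · rwa [degree_sub_eq_left_of_degree_lt hrltp]
      · rw [leadingCoeff_sub_of_degree_lt hrltp, hlc]; norm_num
    have tendB : Tendsto (fun x : ℝ => (pr + rr).eval x) atTop atTop := by
      apply Polynomial.tendsto_atTop_of_leadingCoeff_nonneg
      · rwa [degree_add_eq_left_of_degree_lt hrltp]
      · rw [leadingCoeff_add_of_degree_lt' hrltp, hlc]; norm_num
    have hev : ∀ᶠ x : ℝ in atTop, 0 < (pr - rr).eval x ∧ 0 < (pr + rr).eval x :=
      (tendA.eventually_gt_atTop 0).and (tendB.eventually_gt_atTop 0)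
    have hcast : Tendsto (fun n : ℕ => (n : ℝ)) atTop atTop := tendsto_natCast_atTop_atTop
    have hevn : ∀ᶠ n : ℕ in atTop, |r.eval (n : ℤ)| < |p.eval (n : ℤ)| := by
      filter_upwards [hcast.eventually hev] with n hn
      have h1 : rr.eval (n : ℝ) < pr.eval (n : ℝ) := by
        have := hn.1; simp only [eval_sub] at this; linarith
      have h2 : -(pr.eval (n : ℝ)) < rr.eval (n : ℝ) := by
        have := hn.2; simp only [eval_add] at this; linarith
      have habs : |rr.eval (n : ℝ)| < pr.eval (n : ℝ) := abs_lt.mpr ⟨h2, h1⟩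
      have hprv : pr.eval (n : ℝ) = ((p.eval (n : ℤ) : ℤ) : ℝ) := by
        rw [hpr]; simp [eval_map, eval₂_at_natCast]
      have hrrv : rr.eval (n : ℝ) = ((r.eval (n : ℤ) : ℤ) : ℝ) := by
        rw [hrr]; simp [eval_map, eval₂_at_natCast]
      rw [hprv, hrrv] at habs
      have : |((r.eval (n : ℤ) : ℤ) : ℝ)| < |((p.eval (n : ℤ) : ℤ) : ℝ)| :=
        lt_of_lt_of_le habs (le_abs_self _)
      exact_mod_cast this
    obtain ⟨N, hN⟩ := eventually_atTop.mp hevn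
    -- the roots of r among ℕ form a finite set
    have hroots : {n : ℕ | r.eval (n : ℤ) = 0}.Finite := by
      have hfin : {x : ℤ | r.IsRoot x}.Finite := Polynomial.finite_setOf_isRoot hr0
      exact Set.Finite.preimage (fun a _ b _ hab => Nat.cast_injective hab) hfin
    have hinf2 : ({n : ℕ | 0 < n ∧ p.eval (n : ℤ) ∣ q.eval (n : ℤ)} \
        ({n : ℕ | r.eval (n : ℤ) = 0} ∪ {n : ℕ | n < N})).Infinite :=
      h.diff (hroots.union (Set.finite_lt_nat N))
    obtain ⟨n, hn⟩ := hinf2.nonempty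
    have hnS := hn.1
    have hne : r.eval (n : ℤ) ≠ 0 := fun hc => hn.2 (Or.inl hc)
    have hge : N ≤ n := le_of_not_gt fun hc => hn.2 (Or.inr hc)
    have hdl : |p.eval (n : ℤ)| ≤ |r.eval (n : ℤ)| :=
      Int.le_of_dvd (abs_pos.mpr hne) ((abs_dvd _ _).mpr ((dvd_abs _ _).mpr (hdvdr n hnS)))
    exact absurd (hN n hge) (not_lt.mpr hdl)
  exact (modByMonic_eq_zero_iff_dvd hp).mp hrzero

theorem monic_irreducible_dvd_pow_values
    (k : ℕ) (hk : 2 ≤ k) (p : Polynomial ℤ)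
    (hmonic : p.Monic) (hirr : Irreducible p)
    (h : {n : ℕ | 0 < n ∧ p.eval (n : ℤ) ∣ p.eval ((n : ℤ) ^ k)}.Infinite) :
    p = X ∨ ∃ j : ℕ, 0 < j ∧ Nat.gcd j k = 1 ∧ p = cyclotomic j ℤ := by
  have hndeg : 0 < p.natDegree := by
    rcases Nat.eq_zero_or_pos p.natDegree with h0 | h0
    · exact absurd (hmonic.natDegree_eq_zero.mp h0 ▸ hirr) (by simp [not_irreducible_one])
    · exact h0
  have hdeg : 0 < p.degree := natDegree_pos_iff_degree_pos.mp hndeg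
  -- Step 1: p ∣ p.comp (X ^ k)
  have hdvd : p ∣ p.comp (X ^ k) := by
    apply aux_dvd p _ hmonic hdeg
    convert h using 2 with n
    simp [eval_comp]
  -- Step 2: complex roots
  set ψ := Int.castRingHom ℂ with hψ
  set f := p.map ψ with hf
  have hfdeg : 0 < f.degree := by
    rw [hf, degree_map_eq_of_injective (Int.cast_injective : Function.Injective ψ)]
    exact hdeg
  obtain ⟨α, hα⟩ := Complex.exists_root hfdeg
  have hfne : f ≠ 0 := fun hc => by simp [hc] at hfdeg
  -- roots closed under k-th power
  have hclosed : ∀ z : ℂ, f.IsRoot z → f.IsRoot (z ^ k) := by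
    intro z hz
    obtain ⟨c, hc⟩ := hdvd
    have : f.comp (X ^ k) = f * c.map ψ := by
      rw [hf, show (X : ℂ[X]) = (X : Polynomial ℤ).map ψ from (map_X ψ).symm,
        ← Polynomial.map_pow, ← Polynomial.map_comp, hc, Polynomial.map_mul]
    have he := congrArg (Polynomial.eval z) this
    simp only [eval_comp, eval_pow, eval_X, eval_mul] at he
    simp only [IsRoot] at hz ⊢
    rw [he, hz, zero_mul]
  have hrootsfin : {z : ℂ | f.IsRoot z}.Finite := Polynomial.finite_setOf_isRoot hfne
  haveI : Finite {z : ℂ // f.IsRoot z} := hrootsfin.to_subtype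
  have hmem : ∀ m : ℕ, f.IsRoot (α ^ k ^ m) := by
    intro m
    induction m with
    | zero => simpa using hα
    | succ m ih =>
      have := hclosed _ ih
      rwa [← pow_mul, ← pow_succ] at this
  obtain ⟨m, M, hmM, heq⟩ : ∃ m M : ℕ, m < M ∧ α ^ k ^ m = α ^ k ^ M := by
    obtain ⟨a, b, hab, he⟩ := Finite.exists_ne_map_eq_of_infinite
      (fun m : ℕ => (⟨α ^ k ^ m, hmem m⟩ : {z : ℂ // f.IsRoot z}))
    have he' : α ^ k ^ a = α ^ k ^ b := congrArg Subtype.val he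
    rcases hab.lt_or_gt with h' | h'
    · exact ⟨a, b, h', he'⟩
    · exact ⟨b, a, h', he'.symm⟩
  set β := α ^ k ^ m with hβ
  set t := k ^ (M - m) with ht
  have ht2 : 2 ≤ t := le_trans hk (Nat.le_self_pow (Nat.sub_ne_zero_of_lt hmM) k)
  have hβt : β ^ t = β := by
    rw [hβ, ht, ← pow_mul, ← pow_add, Nat.add_sub_cancel' hmM.le]
    exact heq.symm
  have hsplit : β = 0 ∨ β ^ (t - 1) = 1 := by
    have : β * (β ^ (t - 1) - 1) = 0 := by
      have : β * β ^ (t - 1) = β := by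
        rw [← pow_succ', show t - 1 + 1 = t by omega]
        exact hβt
      ring_nf
      linear_combination this
    rcases mul_eq_zero.mp this with h' | h'
    · exact Or.inl h'
    · exact Or.inr (by linear_combination h')
  rcases hsplit with hβ0 | hβ1
  · -- β = 0 ⇒ α = 0 ⇒ p = X
    left
    have hα0 : α = 0 := pow_eq_zero_iff (pow_ne_zero m (by omega : k ≠ 0)) |>.mp hβ0
    have hc0 : p.coeff 0 = 0 := by
      have h00 : f.eval 0 = 0 := by have h' := hα; rwa [hα0] at h'
      rw [hf] at h00
      simp only [eval_map, eval₂_at_zero, hψ, Int.coe_castRingHom] at h00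
      exact_mod_cast h00
    obtain ⟨c, hc⟩ := X_dvd_iff.mpr hc0
    rcases hirr.isUnit_or_isUnit hc with hu | hu
    · exact absurd hu not_isUnit_X
    · obtain ⟨u, -, hcu⟩ := isUnit_iff.mp hu
      have hlc : p.leadingCoeff = u := by
        rw [hc, ← hcu, leadingCoeff_mul, leadingCoeff_X, leadingCoeff_C, one_mul]
      rw [hmonic.leadingCoeff] at hlc
      rw [hc, ← hcu, ← hlc, map_one, mul_one]
  · -- root of unity
    right
    have hpow1 : α ^ (k ^ m * (t - 1)) = 1 := by
      rw [pow_mul, ← hβ]; exact hβ1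
    have hNpos : 0 < k ^ m * (t - 1) :=
      Nat.mul_pos (Nat.pow_pos (n := m) (by omega)) (by omega)
    have hfo : IsOfFinOrder α := isOfFinOrder_iff_pow_eq_one.mpr ⟨_, hNpos, hpow1⟩
    set j := orderOf α with hj
    have hjpos : 0 < j := hfo.orderOf_pos
    have hprim : IsPrimitiveRoot α j := IsPrimitiveRoot.orderOf α
    -- identify p with cyclotomic j
    have hirrQ : Irreducible (p.map (Int.castRingHom ℚ)) :=
      (hmonic.irreducible_iff_irreducible_map_fraction_map).mp hirr
    have hmonQ : (p.map (Int.castRingHom ℚ)).Monic := hmonic.map _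
    have haev : aeval α (p.map (Int.castRingHom ℚ)) = 0 := by
      have : aeval α p = 0 := by
        rw [aeval_def, ← eval_map]
        exact hα
      rw [← this]
      rw [show (Int.castRingHom ℚ) = algebraMap ℤ ℚ from rfl, aeval_map_algebraMap]
    have hminp : p.map (Int.castRingHom ℚ) = minpoly ℚ α :=
      minpoly.eq_of_irreducible_of_monic hirrQ haev hmonQ
    have hcyc : cyclotomic j ℚ = minpoly ℚ α := cyclotomic_eq_minpoly_rat hprim hjpos
    have hpeq : p = cyclotomic j ℤ := by
      apply map_injective (Int.castRingHom ℚ) Int.cast_injective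
      rw [hminp, ← hcyc, map_cyclotomic_int]
    refine ⟨j, hjpos, ?_, hpeq⟩
    -- gcd condition
    have hroot : f.IsRoot (α ^ k) := by
      have := hclosed α hα
      simpa using this
    have : (cyclotomic j ℂ).IsRoot (α ^ k) := by
      rw [← map_cyclotomic_int j ℂ, ← hpeq]
      exact hroot
    have hprim' : IsPrimitiveRoot (α ^ k) j :=
      (isRoot_cyclotomic_iff_charZero hjpos).mp this
    have hcop : Nat.Coprime k j := (hprim.pow_iff_coprime hjpos k).mp hprim'
    exact hcop.symm
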